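/- Let (W,S) be a Coxeter system of finite rank with all m_{rt} < ∞, and let V be an IR-representation of W with basis {α_s : s ∈ S}. Then for any distinct r, t ∈ S, the 2-dimensional subspace spanned by α_r and α_t is stable under the dihedral subgroup ⟨r, t⟩, and as a representation of ⟨r,t⟩ it is isomorphic to ρ_{k} for some integer 1 ≤ k ≤ m_{rt}/2. -/

import Mathlib

theorem key_aux (C c d : ℂ) (hC : C ≠ 0) (hc : c ≠ 0) (h : c * d = 4 * C ^ 2) :
    c = 2 * (c / (2 * C)) * C ∧ d = 2 * ((2 * C) / c) * C := by
  constructor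
  · field_simp
  · field_simp
    linear_combination h

open Matrix in
theorem key_matrix (c d : ℂ) (m : ℕ) (hm : 2 ≤ m)
    (h : (!![c*d-1, -c; d, -1] : Matrix (Fin 2) (Fin 2) ℂ) ^ m = 1) :
    ∃ (k : ℕ) (a b : ℂ), a ≠ 0 ∧ b ≠ 0 ∧ 1 ≤ k ∧ 2 * k ≤ m ∧
      c = 2 * (a / b) * ((Real.cos (k * Real.pi / m) : ℝ) : ℂ) ∧
      d = 2 * (b / a) * ((Real.cos (k * Real.pi / m) : ℝ) : ℂ) := by
  have hm0 : m ≠ 0 := by omega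
  set X : Matrix (Fin 2) (Fin 2) ℂ := !![c*d-1, -c; d, -1] with hX
  set T : ℂ := c * d - 2 with hT
  have hX2 : X * X = T • X - 1 := by
    ext i j
    fin_cases i <;> fin_cases j <;>
      simp [hX, hT, Matrix.mul_apply, Fin.sum_univ_two, Matrix.one_apply] <;> ring
  set F : ℕ → ℂ × ℂ := fun n =>
    Nat.rec ((0:ℂ), (1:ℂ)) (fun _ p => (T * p.1 + p.2, -p.1)) n with hF
  have hF0 : F 0 = (0, 1) := rfl
  have hFs : ∀ n, F (n+1) = (T * (F n).1 + (F n).2, -(F n).1) := fun n => rfl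
  have claimX : ∀ n, X ^ n = (F n).1 • X + (F n).2 • (1 : Matrix (Fin 2) (Fin 2) ℂ) := by
    intro n
    induction n with
    | zero => simp [hF0]
    | succ n ih =>
      rw [pow_succ, ih, hFs n]
      rw [add_mul, smul_mul_assoc, smul_mul_assoc, hX2, one_mul]
      rw [smul_sub, smul_smul]
      ext i j
      simp [Matrix.add_apply, Matrix.sub_apply, Matrix.smul_apply, Matrix.one_apply, smul_eq_mul]
      ring
  have claimL : ∀ (lam : ℂ), lam * lam = T * lam - 1 →
      ∀ n, lam ^ n = (F n).1 * lam + (F n).2 := by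
    intro lam hlam n
    induction n with
    | zero => simp [hF0]
    | succ n ih =>
      rw [hFs n, pow_succ]
      linear_combination lam * ih + (F n).1 * hlam
  have hFm := claimX m
  rw [h] at hFm
  have hent : ∀ i j, (F m).1 * X i j + (F m).2 * (1 : Matrix (Fin 2) (Fin 2) ℂ) i j
      = (1 : Matrix (Fin 2) (Fin 2) ℂ) i j := by
    intro i j
    have := congrArg (fun M => M i j) hFm.symm
    simpa [Matrix.add_apply, Matrix.smul_apply, smul_eq_mul] using this
  by_cases hcd : c = 0 ∧ d = 0
  · -- X = -1 case
    obtain ⟨rfl, rfl⟩ := hcd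
    rcases Nat.even_or_odd m with he | ho
    · refine ⟨m / 2, 1, 1, one_ne_zero, one_ne_zero, by omega, by omega, ?_, ?_⟩ <;>
      · have hk0 : ((m / 2 : ℕ) : ℝ) ≠ 0 := by
          have : m / 2 ≠ 0 := by omega
          exact_mod_cast this
        have hmnat : m = 2 * (m / 2) := by
          rcases he with ⟨u, hu⟩; omega
        have hmr : (m : ℝ) = 2 * ((m / 2 : ℕ) : ℝ) := by exact_mod_cast hmnat
        rw [show ((m/2 : ℕ) : ℝ) * Real.pi / (m : ℝ) = Real.pi / 2 by
          rw [hmr]; field_simp]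
        simp [Real.cos_pi_div_two]
    · exfalso
      have hX1 : X = -1 := by
        ext i j; fin_cases i <;> fin_cases j <;> simp [hX, Matrix.one_apply]
      rw [hX1, ho.neg_one_pow] at h
      have := congrArg (fun M => M (0 : Fin 2) (0 : Fin 2)) h
      simp [Matrix.one_apply] at this
      norm_num at this
  · -- nondegenerate case
    have hp : (F m).1 = 0 := by
      rcases (by tauto : c ≠ 0 ∨ d ≠ 0) with hc | hd
      · have := hent 0 1
        simp [hX, Matrix.one_apply] at this
        rcases this with h' | h'
        · exact h'
        · exact absurd h' hc
      · have := hent 1 0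
        simp [hX, Matrix.one_apply] at this
        rcases this with h' | h'
        · exact h'
        · exact absurd h' hd
    have hq : (F m).2 = 1 := by
      have := hent 1 1
      simp [hX, Matrix.one_apply, hp] at this
      exact this
    have hT2 : T ≠ 2 := by
      intro h2
      have hFn : ∀ n, F n = ((n : ℂ), 1 - (n : ℂ)) := by
        intro n
        induction n with
        | zero => norm_num [hF0]
        | succ n ih =>
          rw [hFs n, ih, h2]
          simp only [Prod.mk.injEq]
          push_cast
          constructor <;> ring
      have hpm := hp
      rw [hFn m] at hpm
      simp only at hpm
      exact hm0 (by exact_mod_cast hpm)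
    have hTm2 : T ≠ -2 := by
      intro h2
      have hFn : ∀ n, F n = ((-1)^(n+1) * (n : ℂ), (-1)^(n+1) * ((n : ℂ) - 1)) := by
        intro n
        induction n with
        | zero => norm_num [hF0]
        | succ n ih =>
          rw [hFs n, ih, h2]
          simp only [Prod.mk.injEq]
          push_cast
          constructor <;> ring
      have hpm := hp
      rw [hFn m] at hpm
      simp only at hpm
      rcases mul_eq_zero.mp hpm with h' | h'
      · exact pow_ne_zero _ (by norm_num) h'
      · exact hm0 (by exact_mod_cast h')
    obtain ⟨δ, hδ⟩ := IsAlgClosed.exists_pow_nat_eq (T ^ 2 - 4) (zero_lt_two)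
    set lam : ℂ := (T + δ) / 2 with hlamdef
    have hlam : lam * lam = T * lam - 1 := by
      rw [hlamdef]
      linear_combination hδ / 4
    have hlam1 : lam ≠ 1 := by
      intro h1
      rw [h1] at hlam
      exact hT2 (by linear_combination -hlam)
    have hlamm1 : lam ≠ -1 := by
      intro h1
      rw [h1] at hlam
      exact hTm2 (by linear_combination hlam)
    have hlamm : lam ^ m = 1 := by
      rw [claimL lam hlam m, hp, hq]; ring
    have hlam0 : lam ≠ 0 := by
      intro h0
      rw [h0, zero_pow hm0] at hlamm
      exact zero_ne_one hlamm
    haveI : NeZero m := ⟨hm0⟩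
    obtain ⟨j, hj, hζ⟩ :=
      (Complex.isPrimitiveRoot_exp m hm0).eq_pow_of_pow_eq_one hlamm
    have hlamexp : lam = Complex.exp (((2 * Real.pi * j / m : ℝ) : ℂ) * Complex.I) := by
      rw [← hζ, ← Complex.exp_nat_mul]
      congr 1
      have hmC : (m : ℂ) ≠ 0 := by exact_mod_cast hm0
      push_cast
      field_simp
    have hj0 : j ≠ 0 := by
      rintro rfl
      simp at hζ
      exact hlam1 hζ.symm
    have h2j : 2 * j ≠ m := by
      intro h2j
      apply hlamm1
      rw [hlamexp]
      have hx : (2 * Real.pi * j / m : ℝ) = Real.pi := by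
        have : (m : ℝ) = 2 * j := by exact_mod_cast h2j.symm
        rw [this]
        have : (j : ℝ) ≠ 0 := by exact_mod_cast hj0
        field_simp
      rw [hx, Complex.exp_pi_mul_I]
    have hTval : T = 2 * ((Real.cos (2 * Real.pi * j / m) : ℝ) : ℂ) := by
      have hinv : lam⁻¹ = Complex.exp (-(((2 * Real.pi * j / m : ℝ) : ℂ) * Complex.I)) := by
        rw [hlamexp, ← Complex.exp_neg]
      have h2c := Complex.two_cos (x := ((2 * Real.pi * j / m : ℝ) : ℂ))
      rw [Complex.ofReal_cos]
      have hTsum : T = lam + lam⁻¹ := by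
        field_simp
        linear_combination -hlam
      rw [hTsum, hlamexp, ← Complex.exp_neg, ← neg_mul]
      linear_combination -h2c
    obtain ⟨k, hk1, hk2, hkcos⟩ : ∃ k : ℕ, 1 ≤ k ∧ 2 * k < m ∧
        Real.cos (2 * Real.pi * j / m) = Real.cos (2 * Real.pi * k / m) := by
      rcases le_total j (m - j) with hle | hle
      · exact ⟨j, by omega, by omega, rfl⟩
      · refine ⟨m - j, by omega, by omega, ?_⟩
        have hcast : ((m - j : ℕ) : ℝ) = (m : ℝ) - j := by
          push_cast [Nat.cast_sub (le_of_lt hj)]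
          ring
        have hmR : (m : ℝ) ≠ 0 := by exact_mod_cast hm0
        have harg : 2 * Real.pi * ((m - j : ℕ) : ℝ) / m = 2 * Real.pi - 2 * Real.pi * j / m := by
          rw [hcast]; field_simp
        rw [harg, Real.cos_sub]
        simp [Real.cos_two_pi, Real.sin_two_pi]
    set x : ℝ := (k : ℝ) * Real.pi / m with hxdef
    have h2x : 2 * Real.pi * (k : ℝ) / m = 2 * x := by rw [hxdef]; ring
    have hcd4 : c * d = ((4 * Real.cos x ^ 2 : ℝ) : ℂ) := by
      have hdm := Real.cos_two_mul x
      have : T = ((2 * (2 * Real.cos x ^ 2 - 1) : ℝ) : ℂ) := by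
        rw [hTval, hkcos, h2x, hdm]
        push_cast
        ring
      rw [hT] at this
      push_cast at this ⊢
      linear_combination this
    have hmRpos : (0 : ℝ) < m := by positivity
    have hcos_pos : 0 < Real.cos x := by
      apply Real.cos_pos_of_mem_Ioo
      constructor
      · have : (0:ℝ) < x := by
          rw [hxdef]
          apply div_pos (by positivity) hmRpos
        nlinarith [Real.pi_pos]
      · rw [hxdef, div_lt_iff₀ hmRpos]
        have h2k : (2 * k : ℝ) < m := by exact_mod_cast hk2
        nlinarith [Real.pi_pos]
    have hcd4C : c * d = 4 * ((Real.cos x : ℝ) : ℂ) ^ 2 := by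
      rw [hcd4, Complex.ofReal_mul, Complex.ofReal_pow]
      norm_num
    have hcosC : ((Real.cos x : ℝ) : ℂ) ≠ 0 :=
      Complex.ofReal_ne_zero.mpr (ne_of_gt hcos_pos)
    have hcne : c ≠ 0 := by
      intro h0
      rw [h0, zero_mul] at hcd4C
      apply hcosC
      have h4 : ((Real.cos x : ℝ) : ℂ) ^ 2 = 0 := by linear_combination -hcd4C / 4
      exact pow_eq_zero_iff (n := 2) (by norm_num) |>.mp h4
    have hbne : (2 * ((Real.cos x : ℝ) : ℂ)) ≠ 0 :=
      mul_ne_zero two_ne_zero hcosC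
    obtain ⟨hgoal1, hgoal2⟩ := key_aux ((Real.cos x : ℝ) : ℂ) c d hcosC hcne hcd4C
    refine ⟨k, c, 2 * ((Real.cos x : ℝ) : ℂ), hcne, hbne, hk1, by omega, ?_, ?_⟩
    · rw [show (k : ℝ) * Real.pi / (m : ℝ) = x from hxdef.symm]
      exact hgoal1
    · rw [show (k : ℝ) * Real.pi / (m : ℝ) = x from hxdef.symm]
      exact hgoal2


theorem exists_coef {V : Type*} [AddCommGroup V] [Module ℂ V]
    (H : Submodule ℂ V) (f : V →ₗ[ℂ] V) (x : V)
    (hcodim : Module.finrank ℂ (V ⧸ H) = 1)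
    (hfix : ∀ u ∈ H, f u = u) (hnx : f x = -x) (hx : x ≠ 0) (v : V) :
    ∃ c : ℂ, f v = v + c • x := by
  have hxH : x ∉ H := by
    intro hmem
    have h1 : -x = x := by rw [← hnx]; exact hfix x hmem
    apply hx
    have h2 : (2 : ℂ) • x = 0 := by
      calc (2 : ℂ) • x = x + x := two_smul ℂ x
        _ = -x + x := by nth_rewrite 1 [← h1]; rfl
        _ = 0 := neg_add_cancel x
    rcases smul_eq_zero.mp h2 with h | h
    · norm_num at h
    · exact h
  obtain ⟨v₀, hv₀, hgen⟩ := (finrank_eq_one_iff' (K := ℂ) (V := V ⧸ H)).mp hcodim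
  obtain ⟨c₀, hc₀⟩ := hgen (H.mkQ x)
  obtain ⟨c₁, hc₁⟩ := hgen (H.mkQ v)
  have hc₀0 : c₀ ≠ 0 := by
    rintro rfl
    rw [zero_smul] at hc₀
    apply hxH
    rw [← Submodule.ker_mkQ H]
    exact LinearMap.mem_ker.mpr hc₀.symm
  have hmem : v - (c₁ / c₀) • x ∈ H := by
    rw [← Submodule.ker_mkQ H]
    apply LinearMap.mem_ker.mpr
    rw [map_sub, map_smul, ← hc₀, ← hc₁, smul_smul, div_mul_cancel₀ _ hc₀0, sub_self]
  refine ⟨-(2 * (c₁ / c₀)), ?_⟩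
  have hv : v = (v - (c₁ / c₀) • x) + (c₁ / c₀) • x := by abel
  calc f v = f (v - (c₁ / c₀) • x) + (c₁ / c₀) • f x := by
        rw [← map_smul, ← map_add, ← hv]
    _ = (v - (c₁ / c₀) • x) + (c₁ / c₀) • (-x) := by rw [hfix _ hmem, hnx]
    _ = v + (-(2 * (c₁ / c₀))) • x := by module

/-- Let `V` be an IR-representation of a finite-rank Coxeter system with all
`m_{rt} < ∞`, with basis `{α_s}`. For distinct `r, t`, the plane `⟨α_r, α_t⟩` is
stable under the dihedral subgroup `⟨r,t⟩`, and on it the latter acts as `ρ_k` for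
some `1 ≤ k ≤ m_{rt}/2`: after rescaling the basis vectors by nonzero scalars
`a, b`, the action takes the standard `ρ_k` form. -/
theorem ir_rep_dihedral_restriction {S : Type*} [Fintype S] [DecidableEq S]
    {W : Type*} [Group W] (M : CoxeterMatrix S) (cs : CoxeterSystem M W)
    (hfin : ∀ r t : S, M r t ≠ 0)
    {V : Type*} [AddCommGroup V] [Module ℂ V]
    (ρ : Representation ℂ W V) (α : Module.Basis S ℂ V)
    (H : S → Submodule ℂ V)
    (hcodim : ∀ s : S, Module.finrank ℂ (V ⧸ H s) = 1)
    (hfix : ∀ s : S, ∀ v ∈ H s, ρ (cs.simple s) v = v)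
    (hneg : ∀ s : S, ρ (cs.simple s) (α s) = -α s)
    (r t : S) (hrt : r ≠ t) :
    (∀ w ∈ Subgroup.closure {cs.simple r, cs.simple t},
      ∀ v ∈ Submodule.span ℂ {α r, α t}, ρ w v ∈ Submodule.span ℂ {α r, α t}) ∧
    ∃ (kk : ℕ) (a b : ℂ), a ≠ 0 ∧ b ≠ 0 ∧ 1 ≤ kk ∧ 2 * kk ≤ M r t ∧
      ρ (cs.simple r) (α t) =
        α t + (2 * (a / b) * ((Real.cos (kk * Real.pi / (M r t)) : ℝ) : ℂ)) • α r ∧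
      ρ (cs.simple t) (α r) =
        α r + (2 * (b / a) * ((Real.cos (kk * Real.pi / (M r t)) : ℝ) : ℂ)) • α t := by
  obtain ⟨c, hc⟩ := exists_coef (H r) (ρ (cs.simple r)) (α r) (hcodim r) (hfix r)
    (hneg r) (α.ne_zero r) (α t)
  obtain ⟨d, hd⟩ := exists_coef (H t) (ρ (cs.simple t)) (α t) (hcodim t) (hfix t)
    (hneg t) (α.ne_zero t) (α r)
  set P := Submodule.span ℂ ({α r, α t} : Set V) with hP
  have hαrP : α r ∈ P := Submodule.subset_span (Set.mem_insert _ _)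
  have hαtP : α t ∈ P := Submodule.subset_span (Set.mem_insert_of_mem _ rfl)
  have hstabr : ∀ v ∈ P, ρ (cs.simple r) v ∈ P := by
    intro v hv
    obtain ⟨x, y, hxy⟩ := Submodule.mem_span_pair.mp hv
    rw [← hxy, map_add, map_smul, map_smul, hneg r, hc]
    exact P.add_mem (P.smul_mem _ (P.neg_mem hαrP))
      (P.smul_mem _ (P.add_mem hαtP (P.smul_mem _ hαrP)))
  have hstabt : ∀ v ∈ P, ρ (cs.simple t) v ∈ P := by
    intro v hv
    obtain ⟨x, y, hxy⟩ := Submodule.mem_span_pair.mp hv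
    rw [← hxy, map_add, map_smul, map_smul, hneg t, hd]
    exact P.add_mem (P.smul_mem _ (P.add_mem hαrP (P.smul_mem _ hαtP)))
      (P.smul_mem _ (P.neg_mem hαtP))
  constructor
  · intro w hw v hv
    have key : ∀ v ∈ P, ρ w v ∈ P ∧ ρ w⁻¹ v ∈ P := by
      refine Subgroup.closure_induction
        (p := fun w _ => ∀ v ∈ P, ρ w v ∈ P ∧ ρ w⁻¹ v ∈ P) ?_ ?_ ?_ ?_ hw
      · intro g hg
        simp only [Set.mem_insert_iff, Set.mem_singleton_iff] at hg
        rcases hg with rfl | rfl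
        · intro v hv
          rw [cs.inv_simple]
          exact ⟨hstabr v hv, hstabr v hv⟩
        · intro v hv
          rw [cs.inv_simple]
          exact ⟨hstabt v hv, hstabt v hv⟩
      · intro v hv
        rw [map_one, inv_one, map_one]
        exact ⟨hv, hv⟩
      · intro a b _ _ ha hb v hv
        constructor
        · rw [map_mul, Module.End.mul_apply]
          exact (ha _ ((hb v hv).1)).1
        · rw [mul_inv_rev, map_mul, Module.End.mul_apply]
          exact (hb _ ((ha v hv).2)).2
      · intro a _ ha v hv
        exact ⟨(ha v hv).2, by rw [inv_inv]; exact (ha v hv).1⟩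
    exact (key v hv).1
  · have hm2 : 2 ≤ M r t := by
      have h0 := hfin r t
      have h1 := M.off_diagonal r t hrt
      omega
    have hg : (cs.simple r * cs.simple t) ^ (M r t) = 1 := cs.simple_mul_simple_pow r t
    have hρm : (ρ (cs.simple r * cs.simple t)) ^ (M r t) = 1 := by
      rw [← map_pow, hg, map_one]
    set X : Matrix (Fin 2) (Fin 2) ℂ := !![c*d-1, -c; d, -1] with hX
    set f := ρ (cs.simple r * cs.simple t) with hf
    have hfr : f (α r) = X 0 0 • α r + X 1 0 • α t := by
      rw [hf, map_mul, Module.End.mul_apply, hd, map_add, map_smul, hneg r, hc]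
      have e0 : X 0 0 = c * d - 1 := by simp [hX]
      have e1 : X 1 0 = d := by simp [hX]
      rw [e0, e1]
      module
    have hft : f (α t) = X 0 1 • α r + X 1 1 • α t := by
      rw [hf, map_mul, Module.End.mul_apply, hneg t, map_neg, hc]
      have e0 : X 0 1 = -c := by simp [hX]
      have e1 : X 1 1 = -1 := by simp [hX]
      rw [e0, e1]
      module
    have claim : ∀ n, (f ^ n) (α r) = (X ^ n) 0 0 • α r + (X ^ n) 1 0 • α t
        ∧ (f ^ n) (α t) = (X ^ n) 0 1 • α r + (X ^ n) 1 1 • α t := by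
      intro n
      induction n with
      | zero => simp [Matrix.one_apply]
      | succ n ih =>
        have hXn : ∀ i j, (X ^ (n+1)) i j = X i 0 * (X ^ n) 0 j + X i 1 * (X ^ n) 1 j := by
          intro i j
          rw [pow_succ', Matrix.mul_apply, Fin.sum_univ_two]
        constructor
        · rw [pow_succ', Module.End.mul_apply, ih.1, map_add, map_smul, map_smul, hfr, hft,
            hXn 0 0, hXn 1 0]
          module
        · rw [pow_succ', Module.End.mul_apply, ih.2, map_add, map_smul, map_smul, hfr, hft,
            hXn 0 1, hXn 1 1]
          module
    have hmr := (claim (M r t)).1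
    have hmt := (claim (M r t)).2
    rw [hρm] at hmr hmt
    simp only [Module.End.one_apply] at hmr hmt
    have extract : ∀ (u : V) (y z : ℂ), u = y • α r + z • α t →
        α.repr u r = y ∧ α.repr u t = z := by
      intro u y z hu
      constructor
      · have := congrArg (fun w => α.repr w r) hu
        simpa [Module.Basis.repr_self, Finsupp.single_apply, hrt, Ne.symm hrt] using this
      · have := congrArg (fun w => α.repr w t) hu
        simpa [Module.Basis.repr_self, Finsupp.single_apply, hrt, Ne.symm hrt] using this
    have h00 := extract _ _ _ hmr
    have h01 := extract _ _ _ hmt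
    have hr1 : α.repr (α r) r = 1 := by simp [Module.Basis.repr_self]
    have hr2 : α.repr (α r) t = 0 := by simp [Module.Basis.repr_self, Finsupp.single_apply, hrt]
    have ht1 : α.repr (α t) r = 0 := by simp [Module.Basis.repr_self, Finsupp.single_apply, Ne.symm hrt]
    have ht2 : α.repr (α t) t = 1 := by simp [Module.Basis.repr_self]
    have hXm : X ^ (M r t) = 1 := by
      ext i j
      fin_cases i <;> fin_cases j <;> simp only [Matrix.one_apply] <;> norm_num
      · rw [← h00.1, hr1]
      · rw [← h01.1, ht1]
      · rw [← h00.2, hr2]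
      · rw [← h01.2, ht2]
    obtain ⟨k, a, b, ha, hb, hk1, hk2, hceq, hdeq⟩ := key_matrix c d (M r t) hm2 hXm
    exact ⟨k, a, b, ha, hb, hk1, hk2, by rw [hc, hceq], by rw [hd, hdeq]⟩
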